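/- Let X_1, ..., X_n be vectors in ℝ^d and let V be a d×d positive definite real matrix. Define V̄_t = V + ∑_{s=1}^t X_s X_sᵀ for 0 ≤ t ≤ n (so V̄_0 = V). Then log(det(V̄_n) / det(V)) ≤ ∑_{t=1}^n ‖X_t‖²_{V̄_{t-1}^{-1}}. -/

import Mathlib

open Matrix Finset

/-- The weighted norm `‖x‖_A = √(xᵀ A x)`. -/
noncomputable def quadNorm {d : ℕ} (A : Matrix (Fin d) (Fin d) ℝ) (x : Fin d → ℝ) : ℝ :=
  Real.sqrt (x ⬝ᵥ A *ᵥ x)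

lemma posSemidef_vecMulVec' {d : ℕ} (x : Fin d → ℝ) : (vecMulVec x x).PosSemidef := by
  refine PosSemidef.of_dotProduct_mulVec_nonneg ?_ ?_
  · ext i j
    simp [vecMulVec_apply, Matrix.conjTranspose_apply, mul_comm]
  · intro y
    have h : y ⬝ᵥ (vecMulVec x x) *ᵥ y = (x ⬝ᵥ y) * (x ⬝ᵥ y) := by
      simp [dotProduct, vecMulVec_apply, mulVec, Finset.mul_sum, Finset.sum_mul]
      rw [Finset.sum_comm]
      refine Finset.sum_congr rfl fun i _ => Finset.sum_congr rfl fun j _ => ?_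
      ring
    rw [star_trivial, h]
    exact mul_self_nonneg _

lemma det_step' {d : ℕ} {A : Matrix (Fin d) (Fin d) ℝ} (hA : A.PosDef) (x : Fin d → ℝ) :
    (A + vecMulVec x x).det = A.det * (1 + x ⬝ᵥ A⁻¹ *ᵥ x) := by
  rw [vecMulVec_eq Unit, det_add_replicateCol_mul_replicateRow hA.det_pos.ne'.isUnit]
  congr 1
  rw [det_unique]
  simp [Matrix.mul_apply, dotProduct, mulVec, Finset.sum_mul, Finset.mul_sum]
  rw [Finset.sum_comm]
  refine Finset.sum_congr rfl fun i _ => Finset.sum_congr rfl fun j _ => ?_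
  ring

/-- Elliptical potential lemma (Lemma 11 in Abbasi-Yadkori et al., first part):
`log(det(V̄_n)/det(V)) ≤ ∑_{t=1}^n ‖X_t‖²_{V̄_{t-1}⁻¹}`. Here `Vbar t` plays the role of
`V̄_t` with indices shifted so that `X t` (for `t ∈ range n`) is the `(t+1)`-st vector. -/
theorem stmt0 {d : ℕ} (n : ℕ) (X : ℕ → Fin d → ℝ)
    (V : Matrix (Fin d) (Fin d) ℝ) (hV : V.PosDef)
    (Vbar : ℕ → Matrix (Fin d) (Fin d) ℝ)
    (hVbar : ∀ t, Vbar t = V + ∑ s ∈ Finset.range t, vecMulVec (X s) (X s)) :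
    Real.log ((Vbar n).det / V.det) ≤
      ∑ t ∈ Finset.range n, (quadNorm ((Vbar t)⁻¹) (X t)) ^ 2 := by
  have hpos : ∀ t, (Vbar t).PosDef := by
    intro t
    rw [hVbar t]
    refine hV.add_posSemidef ?_
    refine Finset.sum_induction _ _ (fun a b ha hb => ha.add hb) Matrix.PosSemidef.zero
      (fun s _ => posSemidef_vecMulVec' (X s))
  have hq : ∀ t, 0 ≤ X t ⬝ᵥ (Vbar t)⁻¹ *ᵥ X t := by
    intro t
    simpa [star_trivial] using ((hpos t).inv).posSemidef.dotProduct_mulVec_nonneg (X t)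
  have hqn : ∀ t, (quadNorm ((Vbar t)⁻¹) (X t)) ^ 2 = X t ⬝ᵥ (Vbar t)⁻¹ *ᵥ X t := fun t =>
    Real.sq_sqrt (hq t)
  induction n with
  | zero => simp [hVbar 0, div_self hV.det_pos.ne']
  | succ n ih =>
    have hstep : (Vbar (n + 1)).det = (Vbar n).det * (1 + X n ⬝ᵥ (Vbar n)⁻¹ *ᵥ X n) := by
      have : Vbar (n + 1) = Vbar n + vecMulVec (X n) (X n) := by
        rw [hVbar (n + 1), hVbar n, Finset.sum_range_succ, add_assoc]
      rw [this, det_step' (hpos n)]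
    have hdn : 0 < (Vbar n).det := (hpos n).det_pos
    have hV0 : 0 < V.det := hV.det_pos
    have h1q : (0:ℝ) < 1 + X n ⬝ᵥ (Vbar n)⁻¹ *ᵥ X n := by linarith [hq n]
    rw [Finset.sum_range_succ, hstep]
    have : Real.log ((Vbar n).det * (1 + X n ⬝ᵥ (Vbar n)⁻¹ *ᵥ X n) / V.det)
        = Real.log ((Vbar n).det / V.det) + Real.log (1 + X n ⬝ᵥ (Vbar n)⁻¹ *ᵥ X n) := by
      rw [mul_div_right_comm, Real.log_mul (by positivity) h1q.ne']
    rw [this, hqn n]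
    have hlog : Real.log (1 + X n ⬝ᵥ (Vbar n)⁻¹ *ᵥ X n) ≤ X n ⬝ᵥ (Vbar n)⁻¹ *ᵥ X n := by
      have := Real.log_le_sub_one_of_pos h1q
      linarith
    linarith
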